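/- Let X be a complex Banach space and T ∈ L(X) a quasi-compact operator with sup_n ‖Tⁿ‖ < ∞. Then the Cesàro means T_{[n]} = (1/n)∑_{j=1}^n T^j converge in operator norm to a finite rank projection. -/

import Mathlib

open Filter Topology

/-- The `n`-th Cesàro mean `(1/n) ∑_{j=1}^n T^j` of a continuous linear operator. -/
noncomputable def cesaroMean {X : Type*} [NormedAddCommGroup X] [NormedSpace ℂ X]
    (T : X →L[ℂ] X) (n : ℕ) : X →L[ℂ] X :=
  (n : ℂ)⁻¹ • ∑ j ∈ Finset.range n, T ^ (j + 1)

/-- `T` is quasi-compact if some power of `T` is at distance `< 1` from a compact operator. -/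
def QuasiCompact {X : Type*} [NormedAddCommGroup X] [NormedSpace ℂ X]
    (T : X →L[ℂ] X) : Prop :=
  ∃ n : ℕ, 1 ≤ n ∧ ∃ K : X →L[ℂ] X, IsCompactOperator K ∧ ‖T ^ n - K‖ < 1

lemma fd_ker_one_sub_compact {X : Type*} [NormedAddCommGroup X] [NormedSpace ℂ X]
    {C' : X →L[ℂ] X} (h : IsCompactOperator C') :
    FiniteDimensional ℂ (LinearMap.ker ((1 - C' : X →L[ℂ] X) : X →ₗ[ℂ] X)) := by
  set N := LinearMap.ker ((1 - C' : X →L[ℂ] X) : X →ₗ[ℂ] X) with hN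
  have hmem : ∀ x : X, x ∈ N → C' x = x := by
    intro x hx
    have h1 : (1 - C' : X →L[ℂ] X) x = 0 := LinearMap.mem_ker.mp hx
    rw [ContinuousLinearMap.sub_apply, ContinuousLinearMap.one_apply, sub_eq_zero] at h1
    exact h1.symm
  have hS : IsCompact (closure ((C'.toLinearMap) '' Metric.closedBall 0 1)) :=
    IsCompactOperator.isCompact_closure_image_closedBall (𝕜₁ := ℂ) (f := C'.toLinearMap) h 1
  set D : Set X := Metric.closedBall (0 : X) 1 ∩ N with hD
  have hDsub : D ⊆ closure ((C'.toLinearMap) '' Metric.closedBall 0 1) := by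
    rintro x ⟨hx1, hx2⟩
    exact subset_closure ⟨x, hx1, hmem x hx2⟩
  have hDclosed : IsClosed D :=
    Metric.isClosed_closedBall.inter (ContinuousLinearMap.isClosed_ker _)
  have hDcpt : IsCompact D := hS.of_isClosed_subset hDclosed hDsub
  have himg : (Subtype.val '' (Metric.closedBall (0 : N) 1)) = D := by
    ext x
    constructor
    · rintro ⟨y, hy, rfl⟩
      refine ⟨?_, y.2⟩
      rw [Metric.mem_closedBall, dist_zero_right] at hy ⊢
      exact hy
    · rintro ⟨h1, h2⟩
      refine ⟨⟨x, h2⟩, ?_, rfl⟩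
      rw [Metric.mem_closedBall, dist_zero_right] at h1 ⊢
      exact h1
  have hcpt : IsCompact (Metric.closedBall (0 : N) 1) := by
    rw [Topology.IsEmbedding.subtypeVal.isCompact_iff, himg]
    exact hDcpt
  exact FiniteDimensional.of_isCompact_closedBall₀ ℂ one_pos hcpt


set_option maxHeartbeats 1000000 in
/-- Yosida–Kakutani: a power-bounded quasi-compact operator is uniformly mean ergodic,
with limit a finite rank projection. -/
theorem stmt_6 {X : Type*} [NormedAddCommGroup X] [NormedSpace ℂ X] [CompleteSpace X]
    (T : X →L[ℂ] X) (hqc : QuasiCompact T) (C : ℝ) (hbd : ∀ n : ℕ, ‖T ^ n‖ ≤ C) :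
    ∃ P : X →L[ℂ] X, Tendsto (cesaroMean T) atTop (𝓝 P) ∧
      P ∘L P = P ∧ FiniteDimensional ℂ (LinearMap.range (P : X →ₗ[ℂ] X)) := by
  classical
  obtain ⟨m, hm1, K, hKcpt, hKlt⟩ := hqc
  have hC0 : 0 ≤ C := le_trans (norm_nonneg _) (hbd 1)
  have hTC : ‖T‖ ≤ C := by simpa [pow_one] using hbd 1
  -- the invertible element U and compact C'
  set U : (X →L[ℂ] X)ˣ := Units.oneSub (T ^ m - K) hKlt with hUdef
  have hUval : (U : X →L[ℂ] X) = 1 - (T ^ m - K) := rfl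
  set C' : X →L[ℂ] X := (↑U⁻¹ : X →L[ℂ] X) * K with hC'def
  have hC'cpt : IsCompactOperator C' := by
    have h1 : IsCompactOperator ((↑U⁻¹ : X →L[ℂ] X) ∘ K) :=
      hKcpt.continuous_comp (↑U⁻¹ : X →L[ℂ] X).continuous
    have heq : ⇑C' = (↑U⁻¹ : X →L[ℂ] X) ∘ ⇑K := by
      ext x; simp [hC'def, ContinuousLinearMap.mul_apply]
    rw [heq]; exact h1
  have hkeyU : (↑U : X →L[ℂ] X) * (1 - C') = 1 - T ^ m := by
    calc (↑U : X →L[ℂ] X) * (1 - C')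
        = ↑U - ↑U * ((↑U⁻¹ : X →L[ℂ] X) * K) := by rw [mul_sub, mul_one, hC'def]
      _ = ↑U - K := by rw [Units.mul_inv_cancel_left]
      _ = 1 - T ^ m := by rw [hUval]; abel
  -- F = ker (1 - T) is finite dimensional
  set F := LinearMap.ker ((1 - T : X →L[ℂ] X) : X →ₗ[ℂ] X) with hFdef
  have hle : F ≤ LinearMap.ker ((1 - C' : X →L[ℂ] X) : X →ₗ[ℂ] X) := by
    intro x hx
    have h1 : (1 - T : X →L[ℂ] X) x = 0 := LinearMap.mem_ker.mp hx
    rw [ContinuousLinearMap.sub_apply, ContinuousLinearMap.one_apply, sub_eq_zero] at h1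
    have hTx : T x = x := h1.symm
    have hpow : ∀ i : ℕ, (T ^ i) x = x := by
      intro i
      induction i with
      | zero => simp
      | succ i ih => rw [pow_succ, ContinuousLinearMap.mul_apply, hTx, ih]
    have h4 : (1 - T ^ m : X →L[ℂ] X) x = 0 := by
      rw [ContinuousLinearMap.sub_apply, ContinuousLinearMap.one_apply, hpow m, sub_self]
    have h5 : ((↑U : X →L[ℂ] X) * (1 - C')) x = 0 := by rw [hkeyU]; exact h4
    have h7 : ((↑U⁻¹ : X →L[ℂ] X) * ((↑U : X →L[ℂ] X) * (1 - C'))) x = 0 := by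
      rw [ContinuousLinearMap.mul_apply, h5, map_zero]
    rw [Units.inv_mul_cancel_left] at h7
    exact LinearMap.mem_ker.mpr h7
  haveI hkerfd : FiniteDimensional ℂ (LinearMap.ker ((1 - C' : X →L[ℂ] X) : X →ₗ[ℂ] X)) :=
    fd_ker_one_sub_compact hC'cpt
  haveI hFfd : FiniteDimensional ℂ F := Submodule.finiteDimensional_of_le hle
  -- continuous projection onto F
  obtain ⟨f, hf⟩ := Submodule.ClosedComplemented.of_finiteDimensional F
  -- geometric sum identities
  have hgeo : ∀ j : ℕ, (∑ i ∈ Finset.range j, T ^ i) * (1 - T) = 1 - T ^ j := by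
    intro j
    calc (∑ i ∈ Finset.range j, T ^ i) * (1 - T)
        = -((∑ i ∈ Finset.range j, T ^ i) * (T - 1)) := by rw [← mul_neg, neg_sub]
      _ = -(T ^ j - 1) := by rw [geom_sum_mul]
      _ = 1 - T ^ j := neg_sub _ _
  have hgeo' : ∀ j : ℕ, (1 - T) * (∑ i ∈ Finset.range j, T ^ i) = 1 - T ^ j := by
    intro j
    have hcm : Commute (1 - T) (∑ i ∈ Finset.range j, T ^ i) := by
      refine Commute.sub_left (Commute.one_left _) ?_
      exact Commute.sum_right _ _ _ fun i _ => (Commute.refl T).pow_right i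
    rw [hcm.eq]; exact hgeo j
  -- (1 - T) is bounded below on ker f
  have hbelow : ∃ c : ℝ, 0 < c ∧ ∀ x : X, f x = 0 → ‖x‖ ≤ c * ‖(1 - T : X →L[ℂ] X) x‖ := by
    by_contra hcon
    push_neg at hcon
    have hcon' : ∀ c : ℝ, 0 < c → ∃ x : X, f x = 0 ∧ c * ‖(1 - T : X →L[ℂ] X) x‖ < ‖x‖ := by
      intro c hc
      obtain ⟨x, hx1, hx2⟩ := hcon c hc
      exact ⟨x, hx1, hx2⟩
    choose x hx1 hx2 using fun j : ℕ => hcon' ((j : ℝ) + 1) (by positivity)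
    have hxpos : ∀ j, 0 < ‖x j‖ := fun j => lt_of_le_of_lt (by positivity) (hx2 j)
    set u : ℕ → X := fun j => ((‖x j‖ : ℂ))⁻¹ • x j with hu
    have hunorm : ∀ j, ‖u j‖ = 1 := by
      intro j
      rw [hu]
      simp only [norm_smul, norm_inv, Complex.norm_real, Real.norm_eq_abs,
        abs_of_pos (hxpos j)]
      exact inv_mul_cancel₀ (hxpos j).ne'
    have huf : ∀ j, f (u j) = 0 := by
      intro j
      rw [hu]
      simp [map_smul, hx1 j]
    have hu1T : ∀ j, ‖(1 - T : X →L[ℂ] X) (u j)‖ ≤ 1 / ((j : ℝ) + 1) := by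
      intro j
      rw [hu]
      simp only [map_smul, norm_smul, norm_inv, Complex.norm_real, Real.norm_eq_abs,
        abs_of_pos (hxpos j)]
      have h1 : ‖(1 - T : X →L[ℂ] X) (x j)‖ ≤ ‖x j‖ / ((j : ℝ) + 1) := by
        rw [le_div_iff₀ (by positivity)]
        calc ‖(1 - T : X →L[ℂ] X) (x j)‖ * ((j : ℝ) + 1)
            = ((j : ℝ) + 1) * ‖(1 - T : X →L[ℂ] X) (x j)‖ := mul_comm _ _
          _ ≤ ‖x j‖ := (hx2 j).le
      calc ‖x j‖⁻¹ * ‖(1 - T : X →L[ℂ] X) (x j)‖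
          ≤ ‖x j‖⁻¹ * (‖x j‖ / ((j : ℝ) + 1)) := by
            exact mul_le_mul_of_nonneg_left h1 (by positivity)
        _ = 1 / ((j : ℝ) + 1) := by
            rw [← mul_div_assoc, inv_mul_cancel₀ (hxpos j).ne']
    have hT0 : Tendsto (fun j => (1 - T : X →L[ℂ] X) (u j)) atTop (𝓝 0) :=
      squeeze_zero_norm hu1T tendsto_one_div_add_atTop_nhds_zero_nat
    have hfact : (1 : X →L[ℂ] X) - C'
        = ((↑U⁻¹ : X →L[ℂ] X) * (∑ i ∈ Finset.range m, T ^ i)) * (1 - T) := by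
      calc (1 : X →L[ℂ] X) - C'
          = (↑U⁻¹ : X →L[ℂ] X) * ((↑U : X →L[ℂ] X) * (1 - C')) :=
            (Units.inv_mul_cancel_left _ _).symm
        _ = (↑U⁻¹ : X →L[ℂ] X) * (1 - T ^ m) := by rw [hkeyU]
        _ = (↑U⁻¹ : X →L[ℂ] X) * ((∑ i ∈ Finset.range m, T ^ i) * (1 - T)) := by rw [hgeo]
        _ = _ := (mul_assoc _ _ _).symm
    have hC0' : Tendsto (fun j => u j - C' (u j)) atTop (𝓝 0) := by
      have heq : ∀ j, u j - C' (u j)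
          = ((↑U⁻¹ : X →L[ℂ] X) * (∑ i ∈ Finset.range m, T ^ i))
              ((1 - T : X →L[ℂ] X) (u j)) := by
        intro j
        have h1 := congrArg (fun A : X →L[ℂ] X => A (u j)) hfact
        simp only [ContinuousLinearMap.sub_apply, ContinuousLinearMap.one_apply,
          ContinuousLinearMap.mul_apply] at h1
        exact h1
      have hcont := ((↑U⁻¹ : X →L[ℂ] X) * (∑ i ∈ Finset.range m, T ^ i)).continuous.tendsto 0
      have h2 : Tendsto (fun j => ((↑U⁻¹ : X →L[ℂ] X) * (∑ i ∈ Finset.range m, T ^ i))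
          ((1 - T : X →L[ℂ] X) (u j))) atTop (𝓝 0) := by
        have h3 := hcont.comp hT0
        simpa only [Function.comp_def, map_zero] using h3
      exact h2.congr fun j => (heq j).symm
    have hScl : IsCompact (closure ((C'.toLinearMap) '' Metric.closedBall 0 1)) :=
      IsCompactOperator.isCompact_closure_image_closedBall (𝕜₁ := ℂ) (f := C'.toLinearMap)
        hC'cpt 1
    have hmemS : ∀ j, C' (u j) ∈ closure ((C'.toLinearMap) '' Metric.closedBall 0 1) := by
      intro j
      refine subset_closure ⟨u j, ?_, rfl⟩
      rw [Metric.mem_closedBall, dist_zero_right, hunorm j]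
    obtain ⟨w, hwS, φ, hφ, hconv⟩ := hScl.tendsto_subseq hmemS
    have huφ : Tendsto (fun j => u (φ j)) atTop (𝓝 w) := by
      have h1 := (hC0'.comp hφ.tendsto_atTop).add hconv
      simpa using h1
    have hwf : f w = 0 := by
      have h1 : Tendsto (fun j => f (u (φ j))) atTop (𝓝 (f w)) :=
        (f.continuous.tendsto w).comp huφ
      have h2 : Tendsto (fun j => f (u (φ j))) atTop (𝓝 0) := by
        simpa [huf] using (tendsto_const_nhds : Tendsto (fun _ : ℕ => (0 : F)) atTop (𝓝 0))
      exact tendsto_nhds_unique h1 h2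
    have hwT : (1 - T : X →L[ℂ] X) w = 0 :=
      tendsto_nhds_unique (((1 - T : X →L[ℂ] X).continuous.tendsto w).comp huφ)
        (hT0.comp hφ.tendsto_atTop)
    have hwF : w ∈ F := LinearMap.mem_ker.mpr hwT
    have hw0 : w = 0 := by
      have h3 := hf ⟨w, hwF⟩
      have h4 : (⟨w, hwF⟩ : F) = 0 := by
        rw [← h3]; exact_mod_cast hwf
      simpa using congrArg Subtype.val h4
    have hw1 : ‖w‖ = 1 :=
      tendsto_nhds_unique huφ.norm
        (by simpa [hunorm] using (tendsto_const_nhds : Tendsto (fun _ : ℕ => (1:ℝ)) atTop (𝓝 1)))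
    rw [hw0] at hw1
    simp at hw1
  obtain ⟨c, hc0, hc⟩ := hbelow
  -- basic identities for the Cesàro means
  have hMT : ∀ n : ℕ, (cesaroMean T n) * (1 - T) = (n : ℂ)⁻¹ • (T - T ^ (n + 1)) := by
    intro n
    show ((n : ℂ)⁻¹ • ∑ j ∈ Finset.range n, T ^ (j + 1)) * (1 - T) = _
    rw [smul_mul_assoc, Finset.sum_mul]
    congr 1
    have h1 : ∀ j : ℕ, T ^ (j + 1) * (1 - T) = T ^ (j + 1) - T ^ (j + 2) := by
      intro j; rw [mul_sub, mul_one, ← pow_succ]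
    calc ∑ j ∈ Finset.range n, T ^ (j + 1) * (1 - T)
        = ∑ j ∈ Finset.range n, (T ^ (j + 1) - T ^ (j + 2)) := by
          exact Finset.sum_congr rfl fun j _ => h1 j
      _ = T ^ (0 + 1) - T ^ (n + 1) := Finset.sum_range_sub' (fun i => T ^ (i + 1)) n
      _ = T - T ^ (n + 1) := by rw [zero_add, pow_one]
  have hTM : ∀ n : ℕ, (1 - T) * (cesaroMean T n) = (n : ℂ)⁻¹ • (T - T ^ (n + 1)) := by
    intro n
    have hcm : Commute (1 - T) ((n : ℂ)⁻¹ • ∑ j ∈ Finset.range n, T ^ (j + 1)) :=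
      Commute.smul_right (Commute.sub_left (Commute.one_left _)
        (Commute.sum_right _ _ _ fun i _ => (Commute.refl T).pow_right (i + 1))) _
    show (1 - T) * ((n : ℂ)⁻¹ • ∑ j ∈ Finset.range n, T ^ (j + 1))
        = (n : ℂ)⁻¹ • (T - T ^ (n + 1))
    rw [hcm.eq]
    exact hMT n
  have hnormsmul : ∀ n : ℕ, ‖(n : ℂ)⁻¹ • (T - T ^ (n + 1))‖ ≤ (n : ℝ)⁻¹ * (2 * C) := by
    intro n
    rw [norm_smul ((n : ℂ))⁻¹ (T - T ^ (n + 1)), norm_inv]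
    have h1 : ‖((n : ℕ) : ℂ)‖ = (n : ℝ) := by
      simp
    rw [h1]
    refine mul_le_mul_of_nonneg_left ?_ (by positivity)
    calc ‖T - T ^ (n + 1)‖ ≤ ‖T‖ + ‖T ^ (n + 1)‖ := norm_sub_le _ _
      _ ≤ C + C := add_le_add hTC (hbd (n + 1))
      _ = 2 * C := by ring
  have hMnorm : ∀ n : ℕ, 1 ≤ n → ‖cesaroMean T n‖ ≤ C := by
    intro n hn
    have hn0 : (n : ℝ) ≠ 0 := Nat.cast_ne_zero.mpr (by omega)
    show ‖(n : ℂ)⁻¹ • ∑ j ∈ Finset.range n, T ^ (j + 1)‖ ≤ C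
    rw [norm_smul ((n : ℂ))⁻¹ (∑ j ∈ Finset.range n, T ^ (j + 1)), norm_inv]
    have h1 : ‖((n : ℕ) : ℂ)‖ = (n : ℝ) := by simp
    rw [h1]
    have h2 : ‖∑ j ∈ Finset.range n, T ^ (j + 1)‖ ≤ (n : ℝ) * C := by
      calc ‖∑ j ∈ Finset.range n, T ^ (j + 1)‖
          ≤ ∑ j ∈ Finset.range n, ‖T ^ (j + 1)‖ := norm_sum_le _ _
        _ ≤ ∑ _j ∈ Finset.range n, C := Finset.sum_le_sum fun j _ => hbd (j + 1)
        _ = (n : ℝ) * C := by rw [Finset.sum_const, Finset.card_range, nsmul_eq_mul]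
    calc ((n : ℝ))⁻¹ * ‖∑ j ∈ Finset.range n, T ^ (j + 1)‖
        ≤ (n : ℝ)⁻¹ * ((n : ℝ) * C) := by
          exact mul_le_mul_of_nonneg_left h2 (by positivity)
      _ = C := by field_simp
  -- 1 - cesaroMean T k factors through 1 - T
  have hBfac : ∀ k : ℕ, 1 ≤ k → (1 : X →L[ℂ] X) - cesaroMean T k
      = (1 - T) * ((k : ℂ)⁻¹ • ∑ j ∈ Finset.range k, (∑ i ∈ Finset.range (j + 1), T ^ i)) := by
    intro k hk
    have hk0 : ((k : ℕ) : ℂ) ≠ 0 := Nat.cast_ne_zero.mpr (by omega)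
    rw [mul_smul_comm, Finset.mul_sum]
    have h1 : ∀ j ∈ Finset.range k,
        (1 - T) * (∑ i ∈ Finset.range (j + 1), T ^ i) = 1 - T ^ (j + 1) :=
      fun j _ => hgeo' (j + 1)
    rw [Finset.sum_congr rfl h1, Finset.sum_sub_distrib, Finset.sum_const, Finset.card_range,
      smul_sub, ← Nat.cast_smul_eq_nsmul ℂ, smul_smul, inv_mul_cancel₀ hk0, one_smul]
    rfl
  -- the key uniform bound
  set D0 : ℝ := 2 * C * (c * (1 + C)) with hD0def
  have hD0 : 0 ≤ D0 := by positivity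
  have hfac : ∀ k : ℕ, 1 ≤ k → ∀ z : X, ∃ g : X,
      (1 - T : X →L[ℂ] X) g = z - cesaroMean T k z ∧ ‖g‖ ≤ c * ((1 + C) * ‖z‖) := by
    intro k hk z
    set x0 : X := ((k : ℂ)⁻¹ • ∑ j ∈ Finset.range k, (∑ i ∈ Finset.range (j + 1), T ^ i)) z
      with hx0
    have h1 : (1 - T : X →L[ℂ] X) x0 = z - cesaroMean T k z := by
      have h1' := congrArg (fun A : X →L[ℂ] X => A z) (hBfac k hk)
      simp only [ContinuousLinearMap.sub_apply, ContinuousLinearMap.one_apply,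
        ContinuousLinearMap.mul_apply] at h1'
      exact h1'.symm
    set g : X := x0 - (↑(f x0) : X) with hg
    have hgker : f g = 0 := by
      rw [hg, map_sub, hf (f x0), sub_self]
    have h2 : (1 - T : X →L[ℂ] X) ((↑(f x0) : X)) = 0 := LinearMap.mem_ker.mp (f x0).2
    have h3 : (1 - T : X →L[ℂ] X) g = z - cesaroMean T k z := by
      rw [hg, map_sub, h2, sub_zero, h1]
    refine ⟨g, h3, ?_⟩
    have h4 : ‖z - cesaroMean T k z‖ ≤ (1 + C) * ‖z‖ := by
      calc ‖z - cesaroMean T k z‖ ≤ ‖z‖ + ‖cesaroMean T k z‖ := norm_sub_le _ _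
        _ ≤ ‖z‖ + ‖cesaroMean T k‖ * ‖z‖ := by
            exact add_le_add_right ((cesaroMean T k).le_opNorm z) _
        _ ≤ ‖z‖ + C * ‖z‖ := by
            exact add_le_add_right (mul_le_mul_of_nonneg_right (hMnorm k hk) (norm_nonneg z)) _
        _ = (1 + C) * ‖z‖ := by ring
    calc ‖g‖ ≤ c * ‖(1 - T : X →L[ℂ] X) g‖ := hc g hgker
      _ = c * ‖z - cesaroMean T k z‖ := by rw [h3]
      _ ≤ c * ((1 + C) * ‖z‖) := mul_le_mul_of_nonneg_left h4 hc0.le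
  have hkey : ∀ n k : ℕ, 1 ≤ n → 1 ≤ k →
      ‖cesaroMean T n * (1 - cesaroMean T k)‖ ≤ D0 / n := by
    intro n k hn hk
    refine ContinuousLinearMap.opNorm_le_bound _ (by positivity) fun z => ?_
    obtain ⟨g, hg1, hg3⟩ := hfac k hk z
    have h5 : (cesaroMean T n * (1 - cesaroMean T k)) z = (cesaroMean T n * (1 - T)) g := by
      rw [ContinuousLinearMap.mul_apply, ContinuousLinearMap.mul_apply,
        ContinuousLinearMap.sub_apply, ContinuousLinearMap.one_apply, hg1]
    rw [h5]
    have h6 : ‖cesaroMean T n * (1 - T)‖ ≤ (n : ℝ)⁻¹ * (2 * C) := by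
      rw [hMT n]; exact hnormsmul n
    calc ‖(cesaroMean T n * (1 - T)) g‖
        ≤ ‖cesaroMean T n * (1 - T)‖ * ‖g‖ := ContinuousLinearMap.le_opNorm _ _
      _ ≤ ((n : ℝ)⁻¹ * (2 * C)) * (c * ((1 + C) * ‖z‖)) := by
          refine mul_le_mul h6 hg3 (norm_nonneg g) (by positivity)
      _ = (D0 / n) * ‖z‖ := by rw [hD0def]; field_simp
  -- commuting means
  have hcomm : ∀ n k : ℕ, cesaroMean T n * cesaroMean T k = cesaroMean T k * cesaroMean T n := by
    intro n k
    have h1 : Commute ((k : ℂ)⁻¹ • ∑ j ∈ Finset.range k, T ^ (j + 1))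
        ((n : ℂ)⁻¹ • ∑ j ∈ Finset.range n, T ^ (j + 1)) := by
      refine Commute.smul_right ?_ _
      refine Commute.smul_left ?_ _
      refine Commute.sum_right _ _ _ fun j _ => ?_
      refine Commute.sum_left _ _ _ fun i _ => ?_
      exact (Commute.refl T).pow_pow _ _
    exact h1.symm.eq
  -- Cauchy sequence
  have hsplit : ∀ n k : ℕ, cesaroMean T n - cesaroMean T k
      = cesaroMean T n * (1 - cesaroMean T k) - cesaroMean T k * (1 - cesaroMean T n) := by
    intro n k
    rw [mul_sub, mul_sub, mul_one, mul_one, hcomm n k]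
    abel
  have hdistb : ∀ n k N : ℕ, N ≤ n → N ≤ k →
      dist (cesaroMean T (n + 1)) (cesaroMean T (k + 1)) ≤ 2 * D0 / ((N : ℝ) + 1) := by
    intro n k N hn hk
    rw [dist_eq_norm, hsplit (n + 1) (k + 1)]
    have b1 : ‖cesaroMean T (n + 1) * (1 - cesaroMean T (k + 1))‖ ≤ D0 / ((n : ℝ) + 1) := by
      have h := hkey (n + 1) (k + 1) (by omega) (by omega)
      push_cast at h
      exact h
    have b2 : ‖cesaroMean T (k + 1) * (1 - cesaroMean T (n + 1))‖ ≤ D0 / ((k : ℝ) + 1) := by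
      have h := hkey (k + 1) (n + 1) (by omega) (by omega)
      push_cast at h
      exact h
    have hNn : D0 / ((n : ℝ) + 1) ≤ D0 / ((N : ℝ) + 1) := by
      refine div_le_div_of_nonneg_left hD0 (by positivity) ?_
      have : (N : ℝ) ≤ (n : ℝ) := Nat.cast_le.mpr hn
      linarith
    have hNk : D0 / ((k : ℝ) + 1) ≤ D0 / ((N : ℝ) + 1) := by
      refine div_le_div_of_nonneg_left hD0 (by positivity) ?_
      have : (N : ℝ) ≤ (k : ℝ) := Nat.cast_le.mpr hk
      linarith
    calc ‖cesaroMean T (n + 1) * (1 - cesaroMean T (k + 1))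
          - cesaroMean T (k + 1) * (1 - cesaroMean T (n + 1))‖
        ≤ ‖cesaroMean T (n + 1) * (1 - cesaroMean T (k + 1))‖
          + ‖cesaroMean T (k + 1) * (1 - cesaroMean T (n + 1))‖ := norm_sub_le _ _
      _ ≤ D0 / ((N : ℝ) + 1) + D0 / ((N : ℝ) + 1) := add_le_add (b1.trans hNn) (b2.trans hNk)
      _ = 2 * D0 / ((N : ℝ) + 1) := by ring
  have htends : Tendsto (fun N : ℕ => 2 * D0 / ((N : ℝ) + 1)) atTop (𝓝 0) := by
    have h1 := (tendsto_const_div_atTop_nhds_zero_nat (2 * D0)).comp (tendsto_add_atTop_nat 1)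
    refine h1.congr fun N => ?_
    show 2 * D0 / ((N + 1 : ℕ) : ℝ) = 2 * D0 / ((N : ℝ) + 1)
    push_cast
    ring
  have hcs : CauchySeq (fun n : ℕ => cesaroMean T (n + 1)) :=
    cauchySeq_of_le_tendsto_0 _ hdistb htends
  obtain ⟨P, hP⟩ := cauchySeq_tendsto_of_complete hcs
  have hPlim : Tendsto (cesaroMean T) atTop (𝓝 P) := (tendsto_add_atTop_iff_nat 1).mp hP
  -- P is idempotent
  have hMPn : ∀ n : ℕ, 1 ≤ n → ‖cesaroMean T n * (1 - P)‖ ≤ D0 / n := by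
    intro n hn
    have hc1 : Tendsto (fun k => cesaroMean T n * (1 - cesaroMean T k)) atTop
        (𝓝 (cesaroMean T n * (1 - P))) :=
      Filter.Tendsto.const_mul _ (tendsto_const_nhds.sub hPlim)
    refine le_of_tendsto hc1.norm ?_
    filter_upwards [eventually_ge_atTop 1] with k hk
    exact hkey n k hn hk
  have hPidem : P * P = P := by
    have t1 : Tendsto (fun n => cesaroMean T n * (1 - P)) atTop (𝓝 (P * (1 - P))) :=
      Filter.Tendsto.mul_const _ hPlim
    have t2 : Tendsto (fun n => cesaroMean T n * (1 - P)) atTop (𝓝 0) := by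
      refine squeeze_zero_norm' ?_ (tendsto_const_div_atTop_nhds_zero_nat D0)
      filter_upwards [eventually_ge_atTop 1] with n hn
      exact hMPn n hn
    have h1 : P * (1 - P) = 0 := tendsto_nhds_unique t1 t2
    rw [mul_sub, mul_one, sub_eq_zero] at h1
    exact h1.symm
  -- range P ⊆ F
  have hTP : (1 - T) * P = 0 := by
    have t1 : Tendsto (fun n => (1 - T) * cesaroMean T n) atTop (𝓝 ((1 - T) * P)) :=
      Filter.Tendsto.const_mul _ hPlim
    have t2 : Tendsto (fun n => (1 - T) * cesaroMean T n) atTop (𝓝 0) := by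
      refine squeeze_zero_norm' ?_ (tendsto_const_div_atTop_nhds_zero_nat (2 * C))
      filter_upwards [eventually_ge_atTop 1] with n hn
      rw [hTM n]
      calc ‖(n : ℂ)⁻¹ • (T - T ^ (n + 1))‖ ≤ (n : ℝ)⁻¹ * (2 * C) := hnormsmul n
        _ = 2 * C / n := by rw [inv_mul_eq_div]
    exact tendsto_nhds_unique t1 t2
  have hrange : LinearMap.range (P : X →ₗ[ℂ] X) ≤ F := by
    rintro y ⟨z, rfl⟩
    have h1 : (1 - T : X →L[ℂ] X) (P z) = 0 := by
      rw [← ContinuousLinearMap.mul_apply, hTP, ContinuousLinearMap.zero_apply]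
    exact LinearMap.mem_ker.mpr h1
  refine ⟨P, hPlim, hPidem, Submodule.finiteDimensional_of_le hrange⟩
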